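/- arXiv:1401.6823 — 2 statements merged into one kernel-verified Lean document; each statement's English description precedes it below -/
import Mathlib

section
/- Let G be a finite simple graph on n vertices with m edges, where n ≤ m. Then there exists a set S of vertices of G such that the subgraph induced by S is acyclic (a forest) and |S| ≥ 2n²/(2m+n), i.e. |S| ≥ 2n/(2m/n + 1), as real numbers. -/
set_option linter.unusedSectionVars false
set_option linter.unusedVariables false

open Finset SimpleGraph

section Aux

variable {V : Type*} [Fintype V] [DecidableEq V] (G : SimpleGraph V) [DecidableRel G.Adj]

/-- selected set for an ordering -/
def sel {n : ℕ} (σ : V ≃ Fin n) : Finset V :=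
  univ.filter (fun v => ((G.neighborFinset v).filter (fun u => σ u < σ v)).card ≤ 1)

/-- a vertex of a cycle has two distinct neighbors on the cycle -/
lemma exists_two_nbrs {W : Type*} {H : SimpleGraph W} {x : W} (q : H.Walk x x)
    (hq : q.IsCycle) :
    ∃ y z, H.Adj x y ∧ H.Adj x z ∧ y ≠ z ∧ y ∈ q.support ∧ z ∈ q.support := by
  cases q with
  | nil => exact absurd hq (by simp [Walk.isCycle_def])
  | cons h p =>
    rename_i y
    rw [Walk.cons_isCycle_iff] at hq
    obtain ⟨hp, he⟩ := hq
    -- p : Walk y x ; get last edge via reverse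
    obtain ⟨z, h', p', hrev⟩ := Walk.exists_eq_cons_of_ne (h.ne) p.reverse
    have hzx : H.Adj x z := h'
    have hedge : s(x, z) ∈ p.edges := by
      have : s(x, z) ∈ p.reverse.edges := by rw [hrev]; simp
      rwa [Walk.edges_reverse, List.mem_reverse] at this
    have hzy : z ≠ y := by
      rintro rfl
      exact he hedge
    refine ⟨y, z, h, hzx, hzy.symm, ?_, ?_⟩
    · simp [Walk.support_cons]
    · have := Walk.snd_mem_support_of_mem_edges p hedge
      simp [Walk.support_cons]
      right
      exact this

lemma sel_acyclic {n : ℕ} (σ : V ≃ Fin n) :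
    (G.induce ((sel G σ : Finset V) : Set V)).IsAcyclic := by
  intro v p hp
  obtain ⟨x, hx, hmax⟩ := (p.support.toFinset).exists_max_image (fun w => σ w.1)
    ⟨v, by simp⟩
  rw [List.mem_toFinset] at hx
  have hq : (p.rotate x hx).IsCycle := hp.rotate hx
  obtain ⟨y, z, hxy, hxz, hyz, hys, hzs⟩ := exists_two_nbrs (p.rotate x hx) hq
  -- y z ∈ support of rotation are in support of p
  have hsub : ∀ w, w ∈ (p.rotate x hx).support → w ∈ p.support := by
    intro w hw
    rw [Walk.support_eq_cons (p.rotate x hx)] at hw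
    rcases List.mem_cons.1 hw with h1 | h1
    · subst h1; exact hx
    · have := (Walk.support_rotate p x hx).mem_iff.1 h1
      rw [Walk.support_eq_cons p]
      exact List.mem_cons_of_mem _ this
  have hys' := hsub y hys
  have hzs' := hsub z hzs
  -- adjacency in G
  have hGy : G.Adj x.1 y.1 := hxy
  have hGz : G.Adj x.1 z.1 := hxz
  -- x is in sel
  have hxsel : x.1 ∈ sel G σ := by exact_mod_cast x.2
  simp only [sel, mem_filter] at hxsel
  have hcard := hxsel.2
  have hmem : ∀ w : ((sel G σ : Finset V) : Set V), G.Adj x.1 w.1 → w ∈ p.support.toFinset →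
      w.1 ∈ (G.neighborFinset x.1).filter (fun u => σ u < σ x.1) := by
    intro w hadj hwsup
    rw [mem_filter, SimpleGraph.mem_neighborFinset]
    refine ⟨hadj, ?_⟩
    have hle := hmax w hwsup
    have hne : σ w.1 ≠ σ x.1 := fun hh => hadj.ne' (congrArg Subtype.val (Subtype.ext (σ.injective hh)))
    exact lt_of_le_of_ne hle hne
  have hy2 := hmem y hGy (List.mem_toFinset.2 hys')
  have hz2 := hmem z hGz (List.mem_toFinset.2 hzs')
  have hpair : ({y.1, z.1} : Finset V) ⊆ (G.neighborFinset x.1).filter (fun u => σ u < σ x.1) := by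
    intro a ha
    rcases Finset.mem_insert.1 ha with h1 | h1
    · subst h1; exact hy2
    · rw [Finset.mem_singleton] at h1; subst h1; exact hz2
  have h2 : 2 ≤ ((G.neighborFinset x.1).filter (fun u => σ u < σ x.1)).card := by
    have : ({y.1, z.1} : Finset V).card = 2 := by
      rw [Finset.card_insert_of_notMem (by
          simp only [Finset.mem_singleton]
          exact fun hh => hyz (Subtype.ext hh)),
        Finset.card_singleton]
    calc 2 = ({y.1, z.1} : Finset V).card := this.symm
      _ ≤ _ := Finset.card_le_card hpair
  omega

variable {n : ℕ}

/-- rank of v within A under σ -/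
def rnk (σ : V ≃ Fin n) (A : Finset V) (v : V) : ℕ :=
  (A.filter (fun u => σ u < σ v)).card

lemma rnk_lt (σ : V ≃ Fin n) (A : Finset V) {v : V} (hv : v ∈ A) : rnk σ A v < A.card := by
  apply Finset.card_lt_card
  constructor
  · exact Finset.filter_subset _ _
  · intro hsub
    have := hsub hv
    simp at this

lemma rnk_strictMono (σ : V ≃ Fin n) (A : Finset V) {v w : V} (hv : v ∈ A) (hw : w ∈ A)
    (h : σ v < σ w) : rnk σ A v < rnk σ A w := by
  apply Finset.card_lt_card
  constructor
  · exact Finset.filter_subset_filter _ (by intro u hu; exact hu) |>.trans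
      (by intro u hu; rw [Finset.mem_filter] at *; exact ⟨hu.1, hu.2.trans h⟩)
  · intro hsub
    have : v ∈ A.filter (fun u => σ u < σ w) := Finset.mem_filter.2 ⟨hv, h⟩
    have := hsub this
    rw [Finset.mem_filter] at this
    exact absurd this.2 (lt_irrefl _)

lemma rnk_injOn (σ : V ≃ Fin n) (A : Finset V) {v w : V} (hv : v ∈ A) (hw : w ∈ A)
    (h : rnk σ A v = rnk σ A w) : v = w := by
  rcases lt_trichotomy (σ v) (σ w) with hlt | heq | hlt
  · exact absurd h (rnk_strictMono σ A hv hw hlt).ne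
  · exact σ.injective heq
  · exact absurd h.symm (rnk_strictMono σ A hw hv hlt).ne

/-- for each σ and k < |A| there is exactly one element of A of rank k -/
lemma rnk_fiber_card (σ : V ≃ Fin n) (A : Finset V) {k : ℕ} (hk : k < A.card) :
    (A.filter (fun w => rnk σ A w = k)).card = 1 := by
  have himg : A.image (rnk σ A) = Finset.range A.card := by
    apply Finset.eq_of_subset_of_card_le
    · intro j hj
      rw [Finset.mem_image] at hj
      obtain ⟨w, hw, rfl⟩ := hj
      exact Finset.mem_range.2 (rnk_lt σ A hw)
    · rw [Finset.card_range, Finset.card_image_of_injOn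
        (fun v hv w hw h => rnk_injOn σ A hv hw h)]
  have hkimg : k ∈ A.image (rnk σ A) := himg ▸ Finset.mem_range.2 hk
  rw [Finset.mem_image] at hkimg
  obtain ⟨w, hw, hwk⟩ := hkimg
  rw [Finset.card_eq_one]
  refine ⟨w, ?_⟩
  ext u
  simp only [Finset.mem_filter, Finset.mem_singleton]
  constructor
  · rintro ⟨hu, huk⟩
    exact rnk_injOn σ A hu hw (huk.trans hwk.symm)
  · rintro rfl
    exact ⟨hw, hwk⟩

lemma rnk_swap (A : Finset V) {v w : V} (hv : v ∈ A) (hw : w ∈ A) (σ : V ≃ Fin n) :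
    rnk ((Equiv.swap v w).trans σ) A v = rnk σ A w := by
  have hswapA : ∀ u ∈ A, Equiv.swap v w u ∈ A := by
    intro u hu
    rcases eq_or_ne u v with rfl | huv
    · rwa [Equiv.swap_apply_left]
    rcases eq_or_ne u w with rfl | huw
    · rwa [Equiv.swap_apply_right]
    · rwa [Equiv.swap_apply_of_ne_of_ne huv huw]
  unfold rnk
  apply Finset.card_bij' (fun u _ => Equiv.swap v w u) (fun u _ => Equiv.swap v w u)
  · intro u hu
    rw [Finset.mem_filter] at hu ⊢
    refine ⟨hswapA u hu.1, ?_⟩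
    have := hu.2
    simpa [Equiv.trans_apply, Equiv.swap_apply_left] using this
  · intro u hu
    rw [Finset.mem_filter] at hu ⊢
    refine ⟨hswapA u hu.1, ?_⟩
    have := hu.2
    simpa [Equiv.trans_apply, Equiv.swap_apply_self, Equiv.swap_apply_left] using this
  · intro u _; exact Equiv.swap_apply_self _ _ _
  · intro u _; exact Equiv.swap_apply_self _ _ _

/-- swap symmetry: the number of orderings giving rank k to v equals that for w -/
lemma rnk_count_eq (A : Finset V) {v w : V} (hv : v ∈ A) (hw : w ∈ A) (k : ℕ) :
    ((univ : Finset (V ≃ Fin n)).filter (fun σ => rnk σ A v = k)).card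
      = ((univ : Finset (V ≃ Fin n)).filter (fun σ => rnk σ A w = k)).card := by
  have hvw : Equiv.swap v w = Equiv.swap w v := Equiv.swap_comm v w
  apply Finset.card_bij' (fun σ _ => (Equiv.swap v w).trans σ)
    (fun σ _ => (Equiv.swap v w).trans σ)
  · intro σ hσ
    rw [Finset.mem_filter] at hσ ⊢
    refine ⟨Finset.mem_univ _, ?_⟩
    rw [hvw, rnk_swap A hw hv]
    exact hσ.2
  · intro σ hσ
    rw [Finset.mem_filter] at hσ ⊢
    refine ⟨Finset.mem_univ _, ?_⟩
    rw [rnk_swap A hv hw]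
    exact hσ.2
  · intro σ _
    ext u
    simp [Equiv.trans_apply, Equiv.swap_apply_self]
  · intro σ _
    ext u
    simp [Equiv.trans_apply, Equiv.swap_apply_self]

lemma rnk_count_mul (A : Finset V) {v : V} (hv : v ∈ A) {k : ℕ} (hk : k < A.card) :
    A.card * ((univ : Finset (V ≃ Fin n)).filter (fun σ => rnk σ A v = k)).card
      = (univ : Finset (V ≃ Fin n)).card := by
  have hsum : ∑ w ∈ A, ((univ : Finset (V ≃ Fin n)).filter (fun σ => rnk σ A w = k)).card
      = (univ : Finset (V ≃ Fin n)).card := by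
    have : ∀ w ∈ A, ((univ : Finset (V ≃ Fin n)).filter (fun σ => rnk σ A w = k)).card
        = ∑ σ : V ≃ Fin n, if rnk σ A w = k then 1 else 0 := by
      intro w _
      rw [Finset.card_filter]
    rw [Finset.sum_congr rfl this, Finset.sum_comm]
    have : ∀ σ : V ≃ Fin n, (∑ w ∈ A, if rnk σ A w = k then 1 else 0)
        = (A.filter (fun w => rnk σ A w = k)).card := by
      intro σ
      rw [Finset.card_filter]
    rw [Finset.sum_congr rfl (fun σ _ => this σ)]
    rw [Finset.sum_congr rfl (fun σ _ => rnk_fiber_card σ A hk)]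
    simp
  calc A.card * ((univ : Finset (V ≃ Fin n)).filter (fun σ => rnk σ A v = k)).card
      = ∑ w ∈ A, ((univ : Finset (V ≃ Fin n)).filter (fun σ => rnk σ A v = k)).card := by
        rw [Finset.sum_const, smul_eq_mul]
    _ = ∑ w ∈ A, ((univ : Finset (V ≃ Fin n)).filter (fun σ => rnk σ A w = k)).card :=
        Finset.sum_congr rfl (fun w hw => rnk_count_eq A hv hw k)
    _ = _ := hsum

lemma mem_sel_iff (σ : V ≃ Fin n) (v : V) :
    v ∈ sel G σ ↔ rnk σ (insert v (G.neighborFinset v)) v ≤ 1 := by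
  unfold sel rnk
  rw [Finset.mem_filter]
  simp only [Finset.mem_univ, true_and]
  rw [Finset.filter_insert, if_neg (lt_irrefl _)]

lemma cnt_deg_zero (v : V) (hd : G.degree v = 0) :
    ((univ : Finset (V ≃ Fin n)).filter (fun σ => v ∈ sel G σ)).card
      = (univ : Finset (V ≃ Fin n)).card := by
  have hnb : G.neighborFinset v = ∅ := Finset.card_eq_zero.1 hd
  have : ∀ σ : V ≃ Fin n, v ∈ sel G σ := by
    intro σ
    unfold sel
    rw [Finset.mem_filter, hnb]
    simp
  rw [Finset.filter_true_of_mem (fun σ _ => this σ)]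

lemma cnt_deg_pos (v : V) (hd : 1 ≤ G.degree v) :
    (G.degree v + 1) * ((univ : Finset (V ≃ Fin n)).filter (fun σ => v ∈ sel G σ)).card
      = 2 * (univ : Finset (V ≃ Fin n)).card := by
  set A := insert v (G.neighborFinset v) with hA
  have hvA : v ∈ A := Finset.mem_insert_self _ _
  have hAcard : A.card = G.degree v + 1 := by
    rw [hA, Finset.card_insert_of_notMem (SimpleGraph.notMem_neighborFinset_self G v)]
    rfl
  have hfilter : (univ : Finset (V ≃ Fin n)).filter (fun σ => v ∈ sel G σ)
      = ((univ : Finset (V ≃ Fin n)).filter (fun σ => rnk σ A v = 0))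
        ∪ ((univ : Finset (V ≃ Fin n)).filter (fun σ => rnk σ A v = 1)) := by
    rw [← Finset.filter_or]
    apply Finset.filter_congr
    intro σ _
    rw [mem_sel_iff, ← hA]
    omega
  have hdisj : Disjoint ((univ : Finset (V ≃ Fin n)).filter (fun σ => rnk σ A v = 0))
      ((univ : Finset (V ≃ Fin n)).filter (fun σ => rnk σ A v = 1)) := by
    rw [Finset.disjoint_filter]
    intro σ _ h0 h1
    omega
  rw [hfilter, Finset.card_union_of_disjoint hdisj, Nat.mul_add]
  have h0 : (0 : ℕ) < A.card := by omega
  have h1 : (1 : ℕ) < A.card := by omega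
  rw [← hAcard, rnk_count_mul A hvA h0, rnk_count_mul A hvA h1, two_mul]

lemma sum_sel_card :
    ∑ σ : V ≃ Fin n, (sel G σ).card
      = ∑ v : V, ((univ : Finset (V ≃ Fin n)).filter (fun σ => v ∈ sel G σ)).card := by
  have h1 : ∀ σ : V ≃ Fin n, (sel G σ).card = ∑ v : V, if v ∈ sel G σ then 1 else 0 := by
    intro σ
    rw [← Finset.card_filter]
    congr 1
    ext v
    simp
  rw [Finset.sum_congr rfl (fun σ _ => h1 σ), Finset.sum_comm]
  exact Finset.sum_congr rfl (fun v _ => (Finset.card_filter _ _).symm)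

lemma cnt_lower (a b : ℝ) (ha : a ≤ 1)
    (h2 : ∀ d : ℕ, 1 ≤ d → (a - b * (d : ℝ)) * ((d : ℝ) + 1) ≤ 2) (v : V) :
    (((univ : Finset (V ≃ Fin n)).card : ℝ)) * (a - b * (G.degree v : ℝ))
      ≤ (((univ : Finset (V ≃ Fin n)).filter (fun σ => v ∈ sel G σ)).card : ℝ) := by
  set K := ((univ : Finset (V ≃ Fin n)).card : ℝ) with hK
  have hK0 : 0 ≤ K := Nat.cast_nonneg _
  rcases Nat.eq_zero_or_pos (G.degree v) with hd | hd
  · rw [cnt_deg_zero G (n := n) v hd, hd]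
    push_cast
    nlinarith
  · have hc := cnt_deg_pos G (n := n) v hd
    set c := (((univ : Finset (V ≃ Fin n)).filter (fun σ => v ∈ sel G σ)).card : ℝ) with hcdef
    have hcR : ((G.degree v : ℝ) + 1) * c = 2 * K := by
      rw [hcdef, hK]
      exact_mod_cast hc
    have hd1 : (1:ℝ) ≤ (G.degree v : ℝ) := by exact_mod_cast hd
    have h2' := h2 _ hd
    have hmul : K * ((a - b * (G.degree v : ℝ)) * ((G.degree v : ℝ) + 1)) ≤ K * 2 :=
      mul_le_mul_of_nonneg_left h2' hK0
    have hpos : (0:ℝ) < (G.degree v : ℝ) + 1 := by linarith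
    nlinarith [hcR, hmul, hpos]

end Aux

theorem stmt8 {V : Type*} [Fintype V] [DecidableEq V] (G : SimpleGraph V)
    [DecidableRel G.Adj] (n m : ℕ)
    (hn : Fintype.card V = n) (hm : G.edgeFinset.card = m) (hnm : n ≤ m) :
    ∃ S : Finset V, (G.induce (S : Set V)).IsAcyclic ∧
      2 * (n : ℝ) ^ 2 / (2 * (m : ℝ) + (n : ℝ)) ≤ (S.card : ℝ) := by
  rcases Nat.eq_zero_or_pos n with hn0 | hnpos
  · refine ⟨∅, ?_, ?_⟩
    · intro v p hp
      exact absurd v.2 (by simp)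
    · simp [hn0]
  -- main case
  have hNone : Nonempty (V ≃ Fin n) := ⟨Fintype.equivFinOfCardEq hn⟩
  set K := ((univ : Finset (V ≃ Fin n)).card : ℝ) with hKdef
  have hKpos : (0:ℝ) < K := by
    rw [hKdef]
    exact_mod_cast Finset.card_pos.2 Finset.univ_nonempty
  set N := (n : ℝ) with hNdef
  set M := (m : ℝ) with hMdef
  have hN1 : (1:ℝ) ≤ N := by rw [hNdef]; exact_mod_cast hnpos
  have hNM : N ≤ M := by rw [hNdef, hMdef]; exact_mod_cast hnm
  have hD : (0:ℝ) < 2*M + N := by linarith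
  set T : ℝ := 2 * N ^ 2 / (2 * M + N) with hTdef
  have hdegsum : (∑ v : V, (G.degree v : ℝ)) = 2 * M := by
    rw [← Nat.cast_sum]
    rw [hMdef]
    exact_mod_cast congrArg (Nat.cast : ℕ → ℝ) (by rw [SimpleGraph.sum_degrees_eq_twice_card_edges, hm])
  -- obtain per-case linear bound
  obtain ⟨a, b, ha1, h2, hab⟩ :
      ∃ a b : ℝ, a ≤ 1 ∧ (∀ d : ℕ, 1 ≤ d → (a - b * (d:ℝ)) * ((d:ℝ) + 1) ≤ 2) ∧
        T ≤ a * N - b * (2 * M) := by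
    rcases le_or_gt (2*m) (3*n) with hcase | hcase
    · -- sparse case
      have hcR : 2*M ≤ 3*N := by rw [hNdef, hMdef]; exact_mod_cast hcase
      refine ⟨1, 1/6, le_refl _, ?_, ?_⟩
      · intro d hd
        rcases Nat.lt_or_ge d 3 with h3 | h3
        · interval_cases d <;> norm_num
        · have : (3:ℝ) ≤ (d:ℝ) := by exact_mod_cast h3
          nlinarith
      · rw [hTdef, div_le_iff₀ hD]
        nlinarith [mul_nonneg (sub_nonneg.2 hNM) (by linarith : (0:ℝ) ≤ 3*N - 2*M)]
    · -- dense case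
      have hcR : 3*N ≤ 2*M := by rw [hNdef, hMdef]; exact_mod_cast hcase.le
      set D := 2*M + N with hDdef
      have hD4 : 4*N ≤ D := by rw [hDdef]; linarith
      have hDpos : (0:ℝ) < D := hD
      refine ⟨N*(4*D - 2*N)/D^2, 2*N^2/D^2, ?_, ?_, ?_⟩
      · rw [div_le_one (by positivity)]
        nlinarith [mul_le_mul_of_nonneg_right hD4 hDpos.le]
      · intro d hd
        have hdR : (1:ℝ) ≤ (d:ℝ) := by exact_mod_cast hd
        have hrew : N*(4*D - 2*N)/D^2 - 2*N^2/D^2 * (d:ℝ)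
            = (N*(4*D - 2*N) - 2*N^2*(d:ℝ))/D^2 := by ring
        rw [hrew, div_mul_eq_mul_div, div_le_iff₀ (by positivity)]
        nlinarith [sq_nonneg (D - N*((d:ℝ)+1))]
      · have heq : N*(4*D - 2*N)/D^2 * N - 2*N^2/D^2 * (2*M) = 2*N^2/D := by
          field_simp
          ring
        rw [heq, hTdef, hDdef]
  -- summation
  have hpt : ∀ v : V, K * (a - b * (G.degree v : ℝ))
      ≤ (((univ : Finset (V ≃ Fin n)).filter (fun σ => v ∈ sel G σ)).card : ℝ) :=
    fun v => cnt_lower G a b ha1 h2 v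
  have hsum1 : ∑ v : V, K * (a - b * (G.degree v : ℝ)) = K * (a * N - b * (2*M)) := by
    rw [← Finset.mul_sum]
    congr 1
    rw [Finset.sum_sub_distrib, ← Finset.mul_sum, hdegsum, Finset.sum_const, Finset.card_univ,
      hn, nsmul_eq_mul, mul_comm]
  have hsum2 : ∑ v : V, (((univ : Finset (V ≃ Fin n)).filter
        (fun σ => v ∈ sel G σ)).card : ℝ)
      = ∑ σ : V ≃ Fin n, ((sel G σ).card : ℝ) := by
    rw [← Nat.cast_sum, ← Nat.cast_sum, sum_sel_card]
  have hchain : ∑ σ : V ≃ Fin n, T ≤ ∑ σ : V ≃ Fin n, ((sel G σ).card : ℝ) := by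
    rw [Finset.sum_const, Finset.card_univ, nsmul_eq_mul]
    calc (Fintype.card (V ≃ Fin n) : ℝ) * T = K * T := by rw [hKdef, Finset.card_univ]
      _ ≤ K * (a * N - b * (2*M)) := mul_le_mul_of_nonneg_left hab hKpos.le
      _ = ∑ v : V, K * (a - b * (G.degree v : ℝ)) := hsum1.symm
      _ ≤ ∑ v : V, (((univ : Finset (V ≃ Fin n)).filter
            (fun σ => v ∈ sel G σ)).card : ℝ) := Finset.sum_le_sum (fun v _ => hpt v)
      _ = _ := hsum2
  obtain ⟨σ, _, hσ⟩ := Finset.exists_le_of_sum_le Finset.univ_nonempty hchain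
  exact ⟨sel G σ, sel_acyclic G σ, hσ⟩
end

section
/- Let C and n be positive integers such that (C+1) divides n and (C+1)² ≤ n, and set m = C·n. Then: (a) every general two-coloring of the complete graph K_n with exactly m unicolored edges contains a monochromatic clique on n/(C+1) vertices; and (b) there exists a general two-coloring of K_n with exactly m unicolored edges in which every monochromatic clique has at most n/(C+1) vertices. (That is, f(n,m) = n/(m/n + 1) under these divisibility conditions.) -/
open Finset

/-- A general two-coloring of `K_n`: symmetric red/blue predicates such that
every pair of distinct vertices receives at least one color. -/
structure GenTwoColoring (n : ℕ) where
  red : Fin n → Fin n → Bool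
  blue : Fin n → Fin n → Bool
  red_symm : ∀ i j, red i j = red j i
  blue_symm : ∀ i j, blue i j = blue j i
  total : ∀ i j, i ≠ j → red i j = true ∨ blue i j = true

/-- The number of bicolored edges (unordered pairs receiving both colors). -/
def GenTwoColoring.bicoloredCount {n : ℕ} (c : GenTwoColoring n) : ℕ :=
  (Finset.univ.filter fun p : Fin n × Fin n =>
    p.1 < p.2 ∧ c.red p.1 p.2 = true ∧ c.blue p.1 p.2 = true).card

/-- The number of unicolored edges (unordered pairs receiving exactly one color). -/
def GenTwoColoring.unicoloredCount {n : ℕ} (c : GenTwoColoring n) : ℕ :=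
  (Finset.univ.filter fun p : Fin n × Fin n =>
    p.1 < p.2 ∧ ¬(c.red p.1 p.2 = true ∧ c.blue p.1 p.2 = true)).card

/-- `S` is a monochromatic clique: one single color belongs to the color set of
every pair of distinct vertices of `S`. -/
def GenTwoColoring.IsMonoClique {n : ℕ} (c : GenTwoColoring n) (S : Finset (Fin n)) : Prop :=
  (∀ i ∈ S, ∀ j ∈ S, i ≠ j → c.red i j = true) ∨
  (∀ i ∈ S, ∀ j ∈ S, i ≠ j → c.blue i j = true)

lemma double_count {n : ℕ} (E : Fin n → Fin n → Bool) (hs : ∀ i j, E i j = E j i)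
    (hi : ∀ i, E i i = false) :
    2 * (univ.filter fun p : Fin n × Fin n => p.1 < p.2 ∧ E p.1 p.2 = true).card
      = ∑ v, (univ.filter fun w => E v w = true).card := by
  have hsplit : (univ.filter fun p : Fin n × Fin n => E p.1 p.2 = true)
      = (univ.filter fun p : Fin n × Fin n => p.1 < p.2 ∧ E p.1 p.2 = true)
        ∪ (univ.filter fun p : Fin n × Fin n => p.2 < p.1 ∧ E p.1 p.2 = true) := by
    rw [← Finset.filter_or]
    apply Finset.filter_congr
    intro p _
    constructor
    · intro h
      rcases lt_trichotomy p.1 p.2 with h1 | h1 | h1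
      · exact Or.inl ⟨h1, h⟩
      · exfalso; rw [show p.1 = p.2 from h1] at h; simp [hi] at h
      · exact Or.inr ⟨h1, h⟩
    · rintro (⟨_, h⟩ | ⟨_, h⟩) <;> exact h
  have hdisj : Disjoint (univ.filter fun p : Fin n × Fin n => p.1 < p.2 ∧ E p.1 p.2 = true)
      (univ.filter fun p : Fin n × Fin n => p.2 < p.1 ∧ E p.1 p.2 = true) := by
    apply Finset.disjoint_filter_filter'
    rw [disjoint_iff_inf_le]
    rintro p ⟨⟨h1, _⟩, ⟨h2, _⟩⟩
    exact absurd h1 (not_lt.2 h2.le)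
  have hcardeq : (univ.filter fun p : Fin n × Fin n => p.2 < p.1 ∧ E p.1 p.2 = true).card
      = (univ.filter fun p : Fin n × Fin n => p.1 < p.2 ∧ E p.1 p.2 = true).card := by
    apply Finset.card_bij (fun p _ => Prod.swap p)
    · rintro p hp
      simp only [mem_filter, mem_univ, true_and] at hp ⊢
      exact ⟨hp.1, by rw [hs]; exact hp.2⟩
    · rintro p _ q _ h
      exact Prod.swap_injective h
    · rintro p hp
      simp only [mem_filter, mem_univ, true_and] at hp
      refine ⟨Prod.swap p, ?_, by simp⟩
      refine mem_filter.2 ⟨mem_univ _, hp.1, ?_⟩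
      rw [hs]; exact hp.2
  have hfib : (univ.filter fun p : Fin n × Fin n => E p.1 p.2 = true).card
      = ∑ v, (univ.filter fun w => E v w = true).card := by
    rw [Finset.card_eq_sum_card_fiberwise (f := Prod.fst) (t := univ) (fun x _ => mem_univ _)]
    apply Finset.sum_congr rfl
    intro v _
    apply Finset.card_bij (fun p _ => p.2)
    · rintro p hp
      simp only [mem_filter, mem_univ, true_and] at hp ⊢
      rw [← hp.2]; exact hp.1
    · rintro p hp q hq h
      simp only [mem_filter, mem_univ, true_and] at hp hq
      exact Prod.ext (hp.2.trans hq.2.symm) h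
    · rintro w hw
      simp only [mem_filter, mem_univ, true_and] at hw
      refine ⟨(v, w), ?_, rfl⟩
      simp only [mem_filter, mem_univ, true_and]
      simp [hw]
  rw [← hfib, hsplit, Finset.card_union_of_disjoint hdisj, hcardeq]
  ring

lemma arith_key (a m m' d SG SG' : ℕ) (h1 : m' ^ 2 ≤ a * (SG' + m'))
    (h2 : m' + (d + 1) = m) (h3 : (SG' + m') + (d + 1) * (d + 1) ≤ SG + m)
    (h4 : m * (d + 1) ≤ SG + m) : m ^ 2 ≤ (a + 1) * (SG + m) := by
  zify at h1 h2 h3 h4 ⊢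
  have haa : (0 : ℤ) ≤ (a : ℤ) := Int.natCast_nonneg a
  have hsm : (0 : ℤ) ≤ (SG : ℤ) + m := by positivity
  by_cases h5 : (m : ℤ) ^ 2 ≤ (SG : ℤ) + m
  · linarith [mul_nonneg haa hsm]
  · push_neg at h5
    rcases Nat.eq_zero_or_pos (SG' + m') with hz | hz
    · exfalso
      have hm'0 : m' = 0 := by omega
      have hm'0' : (m' : ℤ) = 0 := by exact_mod_cast hm'0
      have hd : ((d : ℤ) + 1) = m := by linarith [h2]
      have hmm : (m : ℤ) ^ 2 = (m : ℤ) * ((d : ℤ) + 1) := by rw [hd]; ring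
      linarith [h4, hmm]
    · have hzpos : (0 : ℤ) < (SG' : ℤ) + m' := by exact_mod_cast hz
      have hkey1 : ((m : ℤ) ^ 2 - ((SG : ℤ) + m)) * (((SG : ℤ) + m) - ((d : ℤ) + 1) ^ 2)
          ≤ ((m : ℤ) - ((d : ℤ) + 1)) ^ 2 * ((SG : ℤ) + m) := by
        linarith [sq_nonneg ((m : ℤ) * ((d : ℤ) + 1) - ((SG : ℤ) + m))]
      have hm'eq : ((m : ℤ) - ((d : ℤ) + 1)) = (m' : ℤ) := by linarith [h2]
      have hkey2 : ((m : ℤ) ^ 2 - ((SG : ℤ) + m)) * ((SG' : ℤ) + m')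
          ≤ ((m : ℤ) ^ 2 - ((SG : ℤ) + m)) * (((SG : ℤ) + m) - ((d : ℤ) + 1) ^ 2) :=
        mul_le_mul_of_nonneg_left (by linarith [h3]) (by linarith [h5])
      have hkey3 : ((m' : ℤ)) ^ 2 * ((SG : ℤ) + m) ≤ ((a : ℤ) * ((SG' : ℤ) + m')) * ((SG : ℤ) + m) :=
        mul_le_mul_of_nonneg_right h1 hsm
      have hkey4 : ((m : ℤ) ^ 2 - ((SG : ℤ) + m)) * ((SG' : ℤ) + m')
          ≤ ((a : ℤ) * ((SG : ℤ) + m)) * ((SG' : ℤ) + m') := by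
        calc ((m : ℤ) ^ 2 - ((SG : ℤ) + m)) * ((SG' : ℤ) + m')
            ≤ ((m : ℤ) - ((d : ℤ) + 1)) ^ 2 * ((SG : ℤ) + m) := hkey2.trans hkey1
          _ = ((m' : ℤ)) ^ 2 * ((SG : ℤ) + m) := by rw [hm'eq]
          _ ≤ ((a : ℤ) * ((SG' : ℤ) + m')) * ((SG : ℤ) + m) := hkey3
          _ = ((a : ℤ) * ((SG : ℤ) + m)) * ((SG' : ℤ) + m') := by ring
      have hfin := le_of_mul_le_mul_right hkey4 hzpos
      linarith [hfin]

lemma caro_wei {n : ℕ} (E : Fin n → Fin n → Bool) (hs : ∀ i j, E i j = E j i)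
    (hi : ∀ i, E i i = false) (A : Finset (Fin n)) :
    ∃ S : Finset (Fin n), S ⊆ A ∧ (∀ i ∈ S, ∀ j ∈ S, E i j = false) ∧
      A.card ^ 2 ≤ S.card * ((∑ v ∈ A, (A.filter fun w => E v w = true).card) + A.card) := by
  induction A using Finset.strongInduction with
  | _ A IH =>
  rcases A.eq_empty_or_nonempty with rfl | hA
  · exact ⟨∅, Finset.Subset.refl _, by simp, by simp⟩
  · obtain ⟨v, hvA, hvmin⟩ := A.exists_min_image (fun x => (A.filter fun w => E x w = true).card) hA
    set δ := (A.filter fun w => E v w = true).card with hδ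
    set N : Finset (Fin n) := insert v (A.filter fun w => E v w = true) with hN
    have hvnot : v ∉ (A.filter fun w => E v w = true) := by
      simp [hi v]
    have hNcard : N.card = δ + 1 := by
      rw [hN, Finset.card_insert_of_notMem hvnot]
    have hNsub : N ⊆ A := by
      rw [hN]; exact Finset.insert_subset hvA (Finset.filter_subset _ _)
    set A' := A \ N with hA'
    have hss : A' ⊂ A := Finset.sdiff_ssubset hNsub (by rw [hN]; exact insert_nonempty _ _)
    obtain ⟨S', hS'sub, hS'ind, hS'bound⟩ := IH A' hss
    -- cardinalities
    have hdn : δ + 1 ≤ A.card := hNcard ▸ Finset.card_le_card hNsub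
    have hA'card : A'.card = A.card - (δ + 1) := by
      rw [hA', Finset.card_sdiff_of_subset hNsub, hNcard]
    -- min degree bound: A.card * δ ≤ ∑
    have hmindeg : A.card * δ ≤ ∑ x ∈ A, (A.filter fun w => E x w = true).card := by
      calc A.card * δ = ∑ _x ∈ A, δ := by rw [Finset.sum_const, smul_eq_mul]
        _ ≤ _ := Finset.sum_le_sum fun x hx => hvmin x hx
    -- edge removal bound
    have hedge : (∑ x ∈ A', (A'.filter fun w => E x w = true).card) + (δ + 1) * δ
        ≤ ∑ x ∈ A, (A.filter fun w => E x w = true).card := by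
      have hsplitsum : ∑ x ∈ A, (A.filter fun w => E x w = true).card
          = (∑ x ∈ A', (A.filter fun w => E x w = true).card)
            + ∑ x ∈ N, (A.filter fun w => E x w = true).card := by
        rw [hA', ← Finset.sum_union (Finset.sdiff_disjoint), Finset.sdiff_union_of_subset hNsub]
      have h1 : ∑ x ∈ A', (A'.filter fun w => E x w = true).card
          ≤ ∑ x ∈ A', (A.filter fun w => E x w = true).card :=
        Finset.sum_le_sum fun x _ => Finset.card_le_card
          (Finset.filter_subset_filter _ (Finset.sdiff_subset))
      have h2 : (δ + 1) * δ ≤ ∑ x ∈ N, (A.filter fun w => E x w = true).card := by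
        calc (δ + 1) * δ = ∑ _x ∈ N, δ := by rw [Finset.sum_const, smul_eq_mul, hNcard]
          _ ≤ _ := Finset.sum_le_sum fun x hx => hvmin x (hNsub hx)
      linarith [hsplitsum, h1, h2]
    -- the new independent set
    have hvS' : v ∉ S' := fun h => (Finset.mem_sdiff.1 (hS'sub h)).2 (by
      rw [hN]; exact Finset.mem_insert_self _ _)
    refine ⟨insert v S', ?_, ?_, ?_⟩
    · exact Finset.insert_subset hvA (hS'sub.trans Finset.sdiff_subset)
    · intro i hiS j hjS
      have hvfree : ∀ w ∈ S', E v w = false := by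
        intro w hw
        have hwN : w ∉ N := (Finset.mem_sdiff.1 (hS'sub hw)).2
        rw [hN] at hwN
        simp only [Finset.mem_insert, Finset.mem_filter] at hwN
        push_neg at hwN
        have hne := hwN.2 ((Finset.mem_sdiff.1 (hS'sub hw)).1)
        exact Bool.eq_false_iff.mpr hne
      rcases Finset.mem_insert.1 hiS with hii | hiS' <;>
        rcases Finset.mem_insert.1 hjS with hjj | hjS'
      · rw [hii, hjj]; exact hi v
      · rw [hii]; exact hvfree j hjS'
      · rw [hjj, hs]; exact hvfree i hiS'
      · exact hS'ind i hiS' j hjS'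
    · -- arithmetic
      rw [Finset.card_insert_of_notMem hvS']
      set a := S'.card
      set m := A.card
      set m' := A'.card
      set SG := ∑ x ∈ A, (A.filter fun w => E x w = true).card
      set SG' := ∑ x ∈ A', (A'.filter fun w => E x w = true).card
      -- facts: m' = m - (δ+1), δ+1 ≤ m, SG' + (δ+1)*δ ≤ SG, m*δ ≤ SG, m'^2 ≤ a*(SG'+m')
      have key : m ^ 2 ≤ (a + 1) * (SG + m) := by
        have h1 : m' ^ 2 ≤ a * (SG' + m') := hS'bound
        have h2 : m' + (δ + 1) = m := by omega
        have e1 : (δ + 1) * (δ + 1) = (δ + 1) * δ + (δ + 1) := by ring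
        have h3 : (SG' + m') + (δ + 1) * (δ + 1) ≤ SG + m := by linarith [hedge, e1, h2]
        have e2 : m * (δ + 1) = m * δ + m := by ring
        have h4 : m * (δ + 1) ≤ SG + m := by linarith [hmindeg, e2]
        exact arith_key _ _ _ _ _ _ h1 h2 h3 h4
      linarith [key]

/-- From a sparse symmetric graph, get a large independent set of exact size k. -/
lemma indep_of_sparse {n C k : ℕ} (hn : 0 < n) (hk : n = (C + 1) * k)
    (E : Fin n → Fin n → Bool) (hs : ∀ i j, E i j = E j i) (hi : ∀ i, E i i = false)
    (hsparse : 2 * (univ.filter fun p : Fin n × Fin n => p.1 < p.2 ∧ E p.1 p.2 = true).card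
      ≤ C * n) :
    ∃ T : Finset (Fin n), T.card = k ∧ ∀ i ∈ T, ∀ j ∈ T, E i j = false := by
  obtain ⟨S, -, hind, hbound⟩ := caro_wei E hs hi univ
  rw [Finset.card_univ, Fintype.card_fin] at hbound
  have hdeg : (∑ v, (univ.filter fun w => E v w = true).card) ≤ C * n := by
    rw [← double_count E hs hi]; exact hsparse
  have h1 : n ^ 2 ≤ S.card * ((C + 1) * n) := by
    calc n ^ 2 ≤ S.card * ((∑ v, (univ.filter fun w => E v w = true).card) + n) := hbound
      _ ≤ S.card * (C * n + n) := by
          exact Nat.mul_le_mul_left _ (by omega)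
      _ = S.card * ((C + 1) * n) := by ring_nf
  have h2 : k ≤ S.card := by
    have : (C + 1) * k * n ≤ S.card * ((C + 1) * n) := by
      calc (C + 1) * k * n = n * n := by rw [hk]
        _ = n ^ 2 := by ring
        _ ≤ _ := h1
    have h3 : (C + 1) * k ≤ S.card * (C + 1) := by
      have := Nat.le_of_mul_le_mul_right (by linarith [this] : (C + 1) * k * n ≤ S.card * (C + 1) * n) hn
      exact this
    exact Nat.le_of_mul_le_mul_left (by linarith [h3]) (Nat.succ_pos C)
  obtain ⟨T, hTsub, hTcard⟩ := Finset.exists_subset_card_eq h2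
  exact ⟨T, hTcard, fun i hiT j hjT => hind i (hTsub hiT) j (hTsub hjT)⟩

lemma part_a {C n k : ℕ} (hn : 0 < n) (hk : n = (C + 1) * k)
    (c : GenTwoColoring n) (hcount : c.unicoloredCount = C * n) :
    ∃ S : Finset (Fin n), S.card = k ∧ c.IsMonoClique S := by
  classical
  set RO : Fin n → Fin n → Bool := fun v w =>
    decide (v ≠ w ∧ c.red v w = true ∧ c.blue v w = false) with hRO
  set BO : Fin n → Fin n → Bool := fun v w =>
    decide (v ≠ w ∧ c.blue v w = true ∧ c.red v w = false) with hBO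
  have hROs : ∀ i j, RO i j = RO j i := by
    intro i j
    simp only [hRO, decide_eq_decide]
    rw [c.red_symm, c.blue_symm, ne_comm]
  have hBOs : ∀ i j, BO i j = BO j i := by
    intro i j
    simp only [hBO, decide_eq_decide]
    rw [c.red_symm, c.blue_symm, ne_comm]
  have hROi : ∀ i, RO i i = false := by intro i; simp [hRO]
  have hBOi : ∀ i, BO i i = false := by intro i; simp [hBO]
  -- split the count
  have hsplit : (univ.filter fun p : Fin n × Fin n => p.1 < p.2 ∧ RO p.1 p.2 = true).card
      + (univ.filter fun p : Fin n × Fin n => p.1 < p.2 ∧ BO p.1 p.2 = true).card = C * n := by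
    rw [← hcount]
    unfold GenTwoColoring.unicoloredCount
    rw [← Finset.card_union_of_disjoint, ← Finset.filter_or]
    · apply congrArg
      apply Finset.filter_congr
      intro p _
      simp only [hRO, hBO, decide_eq_true_eq]
      constructor
      · rintro (⟨hlt, hne, hr, hb⟩ | ⟨hlt, hne, hb, hr⟩)
        · exact ⟨hlt, fun ⟨_, hb'⟩ => by rw [hb] at hb'; exact Bool.false_ne_true hb'⟩
        · exact ⟨hlt, fun ⟨hr', _⟩ => by rw [hr] at hr'; exact Bool.false_ne_true hr'⟩
      · rintro ⟨hlt, hnot⟩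
        have hne : p.1 ≠ p.2 := Fin.ne_of_lt hlt
        rcases c.total p.1 p.2 hne with hr | hb
        · left
          refine ⟨hlt, hne, hr, ?_⟩
          cases h : c.blue p.1 p.2 with
          | false => rfl
          | true => exact absurd ⟨hr, h⟩ hnot
        · right
          refine ⟨hlt, hne, hb, ?_⟩
          cases h : c.red p.1 p.2 with
          | false => rfl
          | true => exact absurd ⟨h, hb⟩ hnot
    · apply Finset.disjoint_filter_filter'
      rw [disjoint_iff_inf_le]
      rintro p ⟨⟨-, h1⟩, ⟨-, h2⟩⟩
      simp only [hRO, hBO, decide_eq_true_eq] at h1 h2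
      rw [h1.2.2] at h2
      exact absurd h1.2.1 (by simp [h2.2.2])
  -- one of them is small
  rcases le_or_gt (2 * (univ.filter fun p : Fin n × Fin n =>
      p.1 < p.2 ∧ RO p.1 p.2 = true).card) (C * n) with hR | hR
  · obtain ⟨T, hTcard, hTind⟩ := indep_of_sparse hn hk RO hROs hROi hR
    refine ⟨T, hTcard, Or.inr ?_⟩
    intro i hiT j hjT hne
    have := hTind i hiT j hjT
    simp only [hRO, decide_eq_false_iff_not] at this
    push_neg at this
    rcases c.total i j hne with hr | hb
    · cases h : c.blue i j with
      | true => rfl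
      | false => exact absurd h (this hne hr)
    · exact hb
  · have hB : 2 * (univ.filter fun p : Fin n × Fin n =>
        p.1 < p.2 ∧ BO p.1 p.2 = true).card ≤ C * n := by omega
    obtain ⟨T, hTcard, hTind⟩ := indep_of_sparse hn hk BO hBOs hBOi hB
    refine ⟨T, hTcard, Or.inl ?_⟩
    intro i hiT j hjT hne
    have := hTind i hiT j hjT
    simp only [hBO, decide_eq_false_iff_not] at this
    push_neg at this
    rcases c.total i j hne with hr | hb
    · exact hr
    · cases h : c.red i j with
      | true => rfl
      | false => exact absurd h (this hne hb)

lemma part_b (C k n : ℕ) (hC : 0 < C) (hkC : C + 1 ≤ k) (hn : n = (C + 1) * k) :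
    ∃ c : GenTwoColoring n, c.unicoloredCount = C * n ∧
      ∀ S : Finset (Fin n), c.IsMonoClique S → S.card ≤ k := by
  classical
  have hkpos : 0 < k := by omega
  have hCpos : 0 < C + 1 := by omega
  -- row and column of a vertex
  set rw : Fin n → ℕ := fun v => (v : ℕ) / (C + 1) with hrw
  set cl : Fin n → ℕ := fun v => (v : ℕ) % (C + 1) with hcl
  have hr_lt : ∀ v : Fin n, rw v < k := by
    intro v
    rw [hrw]
    exact Nat.div_lt_of_lt_mul (by rw [← hn]; exact v.2)
  have hcl_lt : ∀ v : Fin n, cl v < C + 1 := fun v => Nat.mod_lt _ hCpos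
  have hcl_le_k : ∀ v : Fin n, cl v ≤ k := fun v => le_trans (Nat.le_of_lt_succ (hcl_lt v)) (by omega)
  have hrecon : ∀ v : Fin n, (C + 1) * rw v + cl v = (v : ℕ) := fun v => Nat.div_add_mod _ _
  have hinj : ∀ v w : Fin n, rw v = rw w → cl v = cl w → v = w := by
    intro v w h1 h2
    apply Fin.ext
    have e1 := hrecon v
    have e2 := hrecon w
    rw [h1, h2] at e1
    omega
  -- same-B-block relation forces equality when on the same row
  have hBR : ∀ v w : Fin n, (rw v + cl w) % k = (rw w + cl v) % k → rw v = rw w → v = w := by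
    intro v w hB hR
    apply hinj v w hR
    rw [hR] at hB
    have : cl w ≡ cl v [MOD k] := Nat.ModEq.add_left_cancel' (rw w) hB
    have h1 : cl w % k = cl v % k := this
    rw [Nat.mod_eq_of_lt (lt_of_lt_of_le (hcl_lt w) hkC),
        Nat.mod_eq_of_lt (lt_of_lt_of_le (hcl_lt v) hkC)] at h1
    exact (hinj w v hR.symm h1).symm ▸ rfl
  -- the coloring
  set c : GenTwoColoring n :=
    { red := fun v w => decide ¬(v ≠ w ∧ (rw v + cl w) % k = (rw w + cl v) % k)
      blue := fun v w => decide ¬(v ≠ w ∧ rw v = rw w)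
      red_symm := by
        intro i j
        simp only [decide_eq_decide]
        constructor
        · intro h hc; exact h ⟨hc.1.symm, hc.2.symm⟩
        · intro h hc; exact h ⟨hc.1.symm, hc.2.symm⟩
      blue_symm := by
        intro i j
        simp only [decide_eq_decide]
        constructor
        · intro h hc; exact h ⟨hc.1.symm, hc.2.symm⟩
        · intro h hc; exact h ⟨hc.1.symm, hc.2.symm⟩
      total := by
        intro i j hij
        by_contra hcon
        push_neg at hcon
        obtain ⟨h1, h2⟩ := hcon
        simp only [ne_eq, decide_eq_true_eq] at h1 h2
        push_neg at h1 h2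
        exact hij (hBR i j h1.2 h2.2) } with hc
  refine ⟨c, ?_, ?_⟩
  · -- counting unicolored edges
    set E1 : Fin n → Fin n → Bool := fun v w => decide (v ≠ w ∧ rw v = rw w) with hE1
    set E2 : Fin n → Fin n → Bool := fun v w =>
      decide (v ≠ w ∧ (rw v + cl w) % k = (rw w + cl v) % k) with hE2
    have hE1s : ∀ i j, E1 i j = E1 j i := by
      intro i j; simp only [hE1, decide_eq_decide]
      constructor
      · rintro ⟨h1, h2⟩; exact ⟨h1.symm, h2.symm⟩
      · rintro ⟨h1, h2⟩; exact ⟨h1.symm, h2.symm⟩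
    have hE2s : ∀ i j, E2 i j = E2 j i := by
      intro i j; simp only [hE2, decide_eq_decide]
      constructor
      · rintro ⟨h1, h2⟩; exact ⟨h1.symm, h2.symm⟩
      · rintro ⟨h1, h2⟩; exact ⟨h1.symm, h2.symm⟩
    have hE1i : ∀ i, E1 i i = false := by intro i; simp [hE1]
    have hE2i : ∀ i, E2 i i = false := by intro i; simp [hE2]
    -- each vertex has exactly C same-row neighbours
    have hdeg1 : ∀ v : Fin n, (univ.filter fun w => E1 v w = true).card = C := by
      intro v
      have hbnd : ∀ j : Fin (C + 1), (C + 1) * rw v + (j : ℕ) < n := by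
        intro j
        calc (C + 1) * rw v + (j : ℕ) < (C + 1) * rw v + (C + 1) := by
              have := j.2; omega
          _ = (C + 1) * (rw v + 1) := by ring
          _ ≤ (C + 1) * k := Nat.mul_le_mul_left _ (hr_lt v)
          _ = n := hn.symm
      set f : Fin (C + 1) → Fin n := fun j => ⟨(C + 1) * rw v + (j : ℕ), hbnd j⟩ with hf
      have hfr : ∀ j, rw (f j) = rw v := by
        intro j
        show ((C + 1) * rw v + (j : ℕ)) / (C + 1) = rw v
        rw [Nat.mul_add_div hCpos, Nat.div_eq_of_lt j.2]
        omega
      have hveq : f ⟨cl v, hcl_lt v⟩ = v := Fin.ext (hrecon v)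
      have hfinj : Function.Injective f := by
        intro a b hab
        have h := congrArg Fin.val hab
        simp only [hf] at h
        exact Fin.ext (by omega)
      have hset : (univ.filter fun w => E1 v w = true) = (Finset.image f univ).erase v := by
        ext w
        simp only [Finset.mem_filter, Finset.mem_univ, true_and, Finset.mem_erase,
          Finset.mem_image, hE1, decide_eq_true_eq]
        constructor
        · rintro ⟨hne, hrr⟩
          refine ⟨fun h => hne h.symm, ⟨cl w, hcl_lt w⟩, Fin.ext ?_⟩
          show (C + 1) * rw v + cl w = (w : ℕ)
          rw [hrr]; exact hrecon w
        · rintro ⟨hne, j, -, rfl⟩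
          exact ⟨fun h => hne h.symm, (hfr j).symm⟩
      rw [hset, Finset.card_erase_of_mem (Finset.mem_image.2 ⟨_, Finset.mem_univ _, hveq⟩),
        Finset.card_image_of_injective _ hfinj, Finset.card_univ, Fintype.card_fin]
      omega
    -- each vertex has exactly C same-block neighbours
    have hdeg2 : ∀ v : Fin n, (univ.filter fun w => E2 v w = true).card = C := by
      intro v
      have hm_lt : ∀ j : ℕ, (rw v + (k - cl v) + j) % k < k := fun j => Nat.mod_lt _ hkpos
      have hbnd : ∀ j : Fin (C + 1),
          (C + 1) * ((rw v + (k - cl v) + (j : ℕ)) % k) + (j : ℕ) < n := by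
        intro j
        calc (C + 1) * ((rw v + (k - cl v) + (j : ℕ)) % k) + (j : ℕ)
            < (C + 1) * ((rw v + (k - cl v) + (j : ℕ)) % k) + (C + 1) := by
              have := j.2; omega
          _ = (C + 1) * ((rw v + (k - cl v) + (j : ℕ)) % k + 1) := by ring
          _ ≤ (C + 1) * k := Nat.mul_le_mul_left _ (hm_lt (j : ℕ))
          _ = n := hn.symm
      set g : Fin (C + 1) → Fin n :=
        fun j => ⟨(C + 1) * ((rw v + (k - cl v) + (j : ℕ)) % k) + (j : ℕ), hbnd j⟩ with hg
      have hgr : ∀ j, rw (g j) = (rw v + (k - cl v) + (j : ℕ)) % k := by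
        intro j
        show ((C + 1) * ((rw v + (k - cl v) + (j : ℕ)) % k) + (j : ℕ)) / (C + 1)
          = (rw v + (k - cl v) + (j : ℕ)) % k
        rw [Nat.mul_add_div hCpos, Nat.div_eq_of_lt j.2]
        omega
      have hgc : ∀ j, cl (g j) = (j : ℕ) := by
        intro j
        show ((C + 1) * ((rw v + (k - cl v) + (j : ℕ)) % k) + (j : ℕ)) % (C + 1) = (j : ℕ)
        rw [Nat.mul_add_mod, Nat.mod_eq_of_lt j.2]
      have hsB : ∀ j : Fin (C + 1), (rw v + cl (g j)) % k = (rw (g j) + cl v) % k := by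
        intro j
        rw [hgc, hgr]
        have e1 : rw v + (k - cl v) + (j : ℕ) + cl v = rw v + (j : ℕ) + k := by
          have := hcl_le_k v; omega
        rw [Nat.mod_add_mod, e1, Nat.add_mod_right]
      have hveq : g ⟨cl v, hcl_lt v⟩ = v := by
        apply Fin.ext
        show (C + 1) * ((rw v + (k - cl v) + cl v) % k) + cl v = (v : ℕ)
        have e : rw v + (k - cl v) + cl v = rw v + k := by have := hcl_le_k v; omega
        rw [e, Nat.add_mod_right, Nat.mod_eq_of_lt (hr_lt v)]
        exact hrecon v
      have hginj : Function.Injective g := by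
        intro a b hab
        have h := congrArg cl hab
        rw [hgc, hgc] at h
        exact Fin.ext h
      have hset : (univ.filter fun w => E2 v w = true) = (Finset.image g univ).erase v := by
        ext w
        simp only [Finset.mem_filter, Finset.mem_univ, true_and, Finset.mem_erase,
          Finset.mem_image, hE2, decide_eq_true_eq]
        constructor
        · rintro ⟨hne, hB⟩
          refine ⟨fun h => hne h.symm, ⟨cl w, hcl_lt w⟩, Fin.ext ?_⟩
          show (C + 1) * ((rw v + (k - cl v) + cl w) % k) + cl w = (w : ℕ)
          have hrww : (rw v + (k - cl v) + cl w) % k = rw w := by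
            have e1 : rw v + (k - cl v) + cl w = rw v + cl w + (k - cl v) := by omega
            have e2 : rw w + cl v + (k - cl v) = rw w + k := by have := hcl_le_k v; omega
            calc (rw v + (k - cl v) + cl w) % k
                = (rw v + cl w + (k - cl v)) % k := by rw [e1]
              _ = ((rw v + cl w) % k + (k - cl v)) % k := by rw [Nat.mod_add_mod]
              _ = ((rw w + cl v) % k + (k - cl v)) % k := by rw [hB]
              _ = (rw w + cl v + (k - cl v)) % k := by rw [Nat.mod_add_mod]
              _ = (rw w + k) % k := by rw [e2]
              _ = rw w := by rw [Nat.add_mod_right, Nat.mod_eq_of_lt (hr_lt w)]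
          rw [hrww]
          exact hrecon w
        · rintro ⟨hne, j, -, rfl⟩
          exact ⟨fun h => hne h.symm, hsB j⟩
      rw [hset, Finset.card_erase_of_mem (Finset.mem_image.2 ⟨_, Finset.mem_univ _, hveq⟩),
        Finset.card_image_of_injective _ hginj, Finset.card_univ, Fintype.card_fin]
      omega
    -- totals via double counting
    have hc1 : 2 * (univ.filter fun p : Fin n × Fin n => p.1 < p.2 ∧ E1 p.1 p.2 = true).card
        = n * C := by
      rw [double_count E1 hE1s hE1i]
      rw [Finset.sum_congr rfl (fun v _ => hdeg1 v), Finset.sum_const, Finset.card_univ,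
        Fintype.card_fin, smul_eq_mul]
    have hc2 : 2 * (univ.filter fun p : Fin n × Fin n => p.1 < p.2 ∧ E2 p.1 p.2 = true).card
        = n * C := by
      rw [double_count E2 hE2s hE2i]
      rw [Finset.sum_congr rfl (fun v _ => hdeg2 v), Finset.sum_const, Finset.card_univ,
        Fintype.card_fin, smul_eq_mul]
    -- split the unicolored count
    have hsplit : c.unicoloredCount
        = (univ.filter fun p : Fin n × Fin n => p.1 < p.2 ∧ E2 p.1 p.2 = true).card
          + (univ.filter fun p : Fin n × Fin n => p.1 < p.2 ∧ E1 p.1 p.2 = true).card := by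
      unfold GenTwoColoring.unicoloredCount
      rw [← Finset.card_union_of_disjoint, ← Finset.filter_or]
      · apply congrArg
        apply Finset.filter_congr
        intro p _
        simp only [hc, hE1, hE2, decide_eq_true_eq]
        constructor
        · rintro ⟨hlt, hnb⟩
          have hne : p.1 ≠ p.2 := Fin.ne_of_lt hlt
          by_cases hB : (rw p.1 + cl p.2) % k = (rw p.2 + cl p.1) % k
          · exact Or.inl ⟨hlt, hne, hB⟩
          · by_cases hR : rw p.1 = rw p.2
            · exact Or.inr ⟨hlt, hne, hR⟩
            · exact absurd ⟨by simp [hB, hne], by simp [hR, hne]⟩ hnb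
        · rintro (⟨hlt, hne, hB⟩ | ⟨hlt, hne, hR⟩)
          · refine ⟨hlt, fun hcon => ?_⟩
            have := hcon.1
            exact this ⟨hne, hB⟩
          · refine ⟨hlt, fun hcon => ?_⟩
            have := hcon.2
            exact this ⟨hne, hR⟩
      · apply Finset.disjoint_filter_filter'
        rw [disjoint_iff_inf_le]
        rintro p ⟨⟨hlt, h1⟩, ⟨-, h2⟩⟩
        simp only [hE1, hE2, decide_eq_true_eq] at h1 h2
        exact h1.1 (hBR p.1 p.2 h1.2 h2.2)
    rw [hsplit]
    have : n * C + n * C = 2 * (C * n) := by ring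
    omega
  · -- mono cliques have size ≤ k
    intro S hS
    rcases hS with hred | hblue
    · -- red clique: no two share a B-block; map to B-block index
      have : ∀ i ∈ S, ∀ j ∈ S, i ≠ j → ¬((rw i + cl j) % k = (rw j + cl i) % k) := by
        intro i hi j hj hij
        have := hred i hi j hj hij
        simp only [hc, decide_eq_true_eq] at this
        push_neg at this
        exact this hij
      apply le_trans (Finset.card_le_card_of_injOn
        (fun v => (rw v + (k - cl v)) % k) (fun v _ => Finset.mem_range.2 (Nat.mod_lt _ hkpos)) ?_)
        (le_of_eq (Finset.card_range k))
      intro i hi j hj hf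
      have hf' : (rw i + (k - cl i)) % k = (rw j + (k - cl j)) % k := hf
      by_contra hij
      apply this i hi j hj hij
      -- from hf derive sameB
      have h1 : (rw i + (k - cl i) + (cl i + cl j)) % k = (rw j + (k - cl j) + (cl i + cl j)) % k := by
        rw [← Nat.mod_add_mod, hf', Nat.mod_add_mod]
      have e1 : rw i + (k - cl i) + (cl i + cl j) = k + (rw i + cl j) := by
        have := hcl_le_k i; omega
      have e2 : rw j + (k - cl j) + (cl i + cl j) = k + (rw j + cl i) := by
        have := hcl_le_k j; omega
      rw [e1, e2, Nat.add_mod_left, Nat.add_mod_left] at h1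
      exact h1
    · -- blue clique: no two share a row
      have : ∀ i ∈ S, ∀ j ∈ S, i ≠ j → rw i ≠ rw j := by
        intro i hi j hj hij
        have := hblue i hi j hj hij
        simp only [hc, decide_eq_true_eq] at this
        push_neg at this
        exact this hij
      apply le_trans (Finset.card_le_card_of_injOn rw
        (fun v _ => Finset.mem_range.2 (hr_lt v)) ?_) (le_of_eq (Finset.card_range k))
      intro i hi j hj hf
      by_contra hij
      exact this i hi j hj hij hf

theorem stmt16 (C n : ℕ) (hC : 0 < C) (hn : 0 < n) (hdvd : (C + 1) ∣ n)
    (hsq : (C + 1) ^ 2 ≤ n) :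
    (∀ c : GenTwoColoring n, c.unicoloredCount = C * n →
      ∃ S : Finset (Fin n), S.card = n / (C + 1) ∧ c.IsMonoClique S) ∧
    (∃ c : GenTwoColoring n, c.unicoloredCount = C * n ∧
      ∀ S : Finset (Fin n), c.IsMonoClique S → S.card ≤ n / (C + 1)) := by
  obtain ⟨k, hk⟩ := hdvd
  have hkC : C + 1 ≤ k := by
    have : (C + 1) * (C + 1) ≤ (C + 1) * k := by
      calc (C + 1) * (C + 1) = (C + 1) ^ 2 := by ring
        _ ≤ n := hsq
        _ = (C + 1) * k := hk
    exact Nat.le_of_mul_le_mul_left this (Nat.succ_pos C)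
  have hquot : n / (C + 1) = k := by
    rw [hk, Nat.mul_div_cancel_left _ (Nat.succ_pos C)]
  constructor
  · intro c hcount
    obtain ⟨S, hScard, hSmono⟩ := part_a hn hk c hcount
    exact ⟨S, by rw [hquot]; exact hScard, hSmono⟩
  · obtain ⟨c, hcount, hbound⟩ := part_b C k n hC hkC hk
    exact ⟨c, hcount, fun S hS => by rw [hquot]; exact hbound S hS⟩
end
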